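/- Let L be a Lie conformal superalgebra with a conformal representation ρ on a ℤ₂-graded H-module V, and let φ_λ : L ⊗ V → V[λ] be a parity-preserving sesqui-linear map. On the H-module V ⊕ Vε ≅ k[ε] ⊗ V/(ε²) (with ∂(x + yε) = ∂x + (∂y)ε), define ρ^ε_λ(a, x + yε) = ρ_λ(a, x) + (ρ_λ(a, y) + φ_λ(a, x))ε. Then ρ^ε is a conformal representation of L on V ⊕ Vε if and only if φ satisfies φ_{λ+μ}([a_λ b], x) = φ_λ(a, ρ_μ(b, x)) + ρ_λ(a, φ_μ(b, x)) − (−1)^{|a||b|} φ_μ(b, ρ_λ(a, x)) − (−1)^{|a||b|} ρ_μ(b, φ_λ(a, x)) for all homogeneous a, b ∈ L and all x ∈ V. -/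

import Mathlib

open Finsupp

noncomputable section

variable (k : Type) [Field k] [CharZero k]

section Base

variable {M N : Type} [AddCommGroup M] [Module k M] [AddCommGroup N] [Module k N]

/-- Multiplication by `λ` on `M[λ] := ℕ →₀ M`. -/
def lamMul : (ℕ →₀ M) →ₗ[k] (ℕ →₀ M) := Finsupp.lmapDomain M k Nat.succ

/-- Apply a linear map to every coefficient of a polynomial. -/
def cw (f : M →ₗ[k] N) : (ℕ →₀ M) →ₗ[k] (ℕ →₀ N) := Finsupp.mapRange.linearMap f

/-- The constant-polynomial embedding `M → M[λ]`. -/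
def cst : M →ₗ[k] (ℕ →₀ M) := Finsupp.lsingle 0

/-- Multiplication by `λ` on `M[λ,μ] := ℕ →₀ (ℕ →₀ M)` (outer variable `μ`, inner `λ`). -/
def lamMul2 : (ℕ →₀ (ℕ →₀ M)) →ₗ[k] (ℕ →₀ (ℕ →₀ M)) := cw k (lamMul k)

/-- Multiplication by `μ` on `M[λ,μ]`. -/
def muMul2 : (ℕ →₀ (ℕ →₀ M)) →ₗ[k] (ℕ →₀ (ℕ →₀ M)) := Finsupp.lmapDomain (ℕ →₀ M) k Nat.succ

/-- The constant embedding `M → M[λ,μ]`. -/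
def cst2 : M →ₗ[k] (ℕ →₀ (ℕ →₀ M)) := (cst k).comp (cst k)

/-- Interchange of the two variables of `M[λ,μ]`. -/
def swapVar : (ℕ →₀ (ℕ →₀ M)) →ₗ[k] (ℕ →₀ (ℕ →₀ M)) :=
  Finsupp.lsum k fun n => cw k (Finsupp.lsingle n)

/-- The substitution `λ ↦ -∂-λ` on `M[λ]`, where `∂` acts on `M` via `D`. -/
def substNeg (D : M →ₗ[k] M) : (ℕ →₀ M) →ₗ[k] (ℕ →₀ M) :=
  Finsupp.lsum k fun n => ((-(cw k D) - lamMul k) ^ n) ∘ₗ cst k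

/-- The substitution `ν ↦ λ+μ` from `M[ν]` to `M[λ,μ]`. -/
def substAdd : (ℕ →₀ M) →ₗ[k] (ℕ →₀ (ℕ →₀ M)) :=
  Finsupp.lsum k fun n => ((lamMul2 k + muMul2 k) ^ n) ∘ₗ cst2 k

end Base
section Ops

variable {A B C V W L P : Type} [AddCommGroup A] [Module k A] [AddCommGroup B] [Module k B]
  [AddCommGroup C] [Module k C] [AddCommGroup V] [Module k V] [AddCommGroup W] [Module k W]
  [AddCommGroup L] [Module k L] [AddCommGroup P] [Module k P]

/-- `P_λ(a, Q_μ(b, c))`, an element of `W[λ,μ]` (outer variable `μ`, inner `λ`). -/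
def opComp (F : A →ₗ[k] C →ₗ[k] (ℕ →₀ W)) (G : B →ₗ[k] V →ₗ[k] (ℕ →₀ C))
    (a : A) (b : B) (c : V) : ℕ →₀ (ℕ →₀ W) := cw k (F a) (G b c)

/-- `Q_μ(b, P_λ(a, c))`, an element of `W[λ,μ]` (outer variable `μ`, inner `λ`). -/
def opCompSwap (F : B →ₗ[k] C →ₗ[k] (ℕ →₀ W)) (G : A →ₗ[k] V →ₗ[k] (ℕ →₀ C))
    (b : B) (a : A) (c : V) : ℕ →₀ (ℕ →₀ W) := swapVar k (cw k (F b) (G a c))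

/-- `Q_{λ+μ}(P_λ(a, b), c)`, an element of `W[λ,μ]` (outer variable `μ`, inner `λ`). -/
def opSubst (F : A →ₗ[k] B →ₗ[k] (ℕ →₀ C)) (G : C →ₗ[k] V →ₗ[k] (ℕ →₀ W))
    (a : A) (b : B) (c : V) : ℕ →₀ (ℕ →₀ W) :=
  Finsupp.lsum k (fun n => ((lamMul2 k (M := W)) ^ n) ∘ₗ substAdd k) (cw k (G.flip c) (F a b))

end Ops

/-- The Koszul sign `(-1)^{|a||b|}` attached to parities `i`, `j`. -/
def sgn (i j : ZMod 2) : ℤ := if i = 1 ∧ j = 1 then -1 else 1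

section Structures

variable {A B C L V P : Type} [AddCommGroup A] [Module k A] [AddCommGroup B] [Module k B]
  [AddCommGroup C] [Module k C]
  [AddCommGroup L] [Module k L] [AddCommGroup V] [Module k V] [AddCommGroup P] [Module k P]

/-- A `ℤ₂`-graded module over `H = k[∂]`, where `∂` acts via `D`:
the two graded components are complementary and `∂`-invariant. -/
structure IsGradedHMod (D : L →ₗ[k] L) (par : ZMod 2 → Submodule k L) : Prop where
  sup_eq_top : par 0 ⊔ par 1 = ⊤
  inf_eq_bot : par 0 ⊓ par 1 = ⊥
  map_d : ∀ i a, a ∈ par i → D a ∈ par i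

/-- Sesqui-linearity of a pairing `A ⊗ B → C[λ]` with respect to the `∂`-actions
`DA`, `DB`, `DC`: `F(∂a, b) = -λ F(a,b)` and `F(a, ∂b) = (∂+λ) F(a,b)`. -/
structure IsSesqui (DA : A →ₗ[k] A) (DB : B →ₗ[k] B) (DC : C →ₗ[k] C)
    (F : A →ₗ[k] B →ₗ[k] (ℕ →₀ C)) : Prop where
  dleft : ∀ a b, F (DA a) b = -(lamMul k (F a b))
  dright : ∀ a b, F a (DB b) = cw k DC (F a b) + lamMul k (F a b)

/-- A Lie conformal superalgebra structure on the `H`-module `L` (with `∂` acting via `D`)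
with `ℤ₂`-grading `par` and `λ`-bracket `Br`. -/
structure IsLieConfSuper (D : L →ₗ[k] L) (par : ZMod 2 → Submodule k L)
    (Br : L →ₗ[k] L →ₗ[k] (ℕ →₀ L)) : Prop where
  graded : IsGradedHMod k D par
  sesqui : IsSesqui k D D D Br
  parity : ∀ i j a b, a ∈ par i → b ∈ par j → ∀ n, Br a b n ∈ par (i + j)
  skew : ∀ i j a b, a ∈ par i → b ∈ par j → Br a b = -(sgn i j • substNeg k D (Br b a))
  jacobi : ∀ i j a b c, a ∈ par i → b ∈ par j →
    opComp k Br Br a b c = opSubst k Br Br a b c + sgn i j • opCompSwap k Br Br b a c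

/-- A Poisson conformal superalgebra structure on the `H`-module `P`, with `λ`-bracket `Br`
and conformally associative, supercommutative product `Ml`, linked by the conformal
Leibniz rule. -/
structure IsPoissonConfSuper (D : P →ₗ[k] P) (par : ZMod 2 → Submodule k P)
    (Br Ml : P →ₗ[k] P →ₗ[k] (ℕ →₀ P)) : Prop where
  lie : IsLieConfSuper k D par Br
  mul_sesqui : IsSesqui k D D D Ml
  mul_parity : ∀ i j a b, a ∈ par i → b ∈ par j → ∀ n, Ml a b n ∈ par (i + j)
  assoc : ∀ a b c, opComp k Ml Ml a b c = opSubst k Ml Ml a b c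
  comm : ∀ i j a b, a ∈ par i → b ∈ par j → Ml a b = sgn i j • substNeg k D (Ml b a)
  leibniz : ∀ i j a b c, a ∈ par i → b ∈ par j →
    opComp k Br Ml a b c = opSubst k Br Ml a b c + sgn i j • opCompSwap k Ml Br b a c

/-- A conformal representation of the Lie conformal superalgebra `(L, D, par, Br)` on the
`ℤ₂`-graded `H`-module `(V, DV, parV)`. -/
structure IsConfRep (D : L →ₗ[k] L) (par : ZMod 2 → Submodule k L)
    (Br : L →ₗ[k] L →ₗ[k] (ℕ →₀ L)) (DV : V →ₗ[k] V) (parV : ZMod 2 → Submodule k V)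
    (ρ : L →ₗ[k] V →ₗ[k] (ℕ →₀ V)) : Prop where
  sesqui : IsSesqui k D DV DV ρ
  parity : ∀ i j a x, a ∈ par i → x ∈ parV j → ∀ n, ρ a x n ∈ parV (i + j)
  jacobi : ∀ i j a b x, a ∈ par i → b ∈ par j →
    opComp k ρ ρ a b x - sgn i j • opCompSwap k ρ ρ b a x = opSubst k Br ρ a b x

/-- Finiteness of an `H`-module: it is generated, as a `k[∂]`-module, by finitely
many elements. -/
def IsHFinite (DV : V →ₗ[k] V) : Prop :=
  ∃ s : Finset V, ∀ W : Submodule k V, (∀ x ∈ W, DV x ∈ W) → (↑s : Set V) ⊆ ↑W → W = ⊤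

/-- The Lie conformal superalgebra `(L, D, par, Br)` admits a finite faithful conformal
representation. -/
def HasFFR (D : L →ₗ[k] L) (par : ZMod 2 → Submodule k L)
    (Br : L →ₗ[k] L →ₗ[k] (ℕ →₀ L)) : Prop :=
  ∃ (V : Type) (_ : AddCommGroup V) (_ : Module k V) (DV : V →ₗ[k] V)
    (parV : ZMod 2 → Submodule k V) (ρ : L →ₗ[k] V →ₗ[k] (ℕ →₀ V)),
    IsGradedHMod k DV parV ∧ IsConfRep k D par Br DV parV ρ ∧ IsHFinite k DV ∧
      ∀ a : L, a ≠ 0 → ρ a ≠ 0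

/-- `ρ` (defined on the ambient space `P`) restricts to a conformal representation of the
Lie conformal subalgebra `L ≤ P` (with ambient `λ`-bracket `Br`) on `(V, DV, parV)`. -/
def IsConfRepOn (D : P →ₗ[k] P) (par : ZMod 2 → Submodule k P)
    (Br : P →ₗ[k] P →ₗ[k] (ℕ →₀ P)) (L : Submodule k P)
    (DV : V →ₗ[k] V) (parV : ZMod 2 → Submodule k V)
    (ρ : P →ₗ[k] V →ₗ[k] (ℕ →₀ V)) : Prop :=
  (∀ a ∈ L, ∀ x, ρ (D a) x = -(lamMul k (ρ a x))) ∧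
  (∀ a ∈ L, ∀ x, ρ a (DV x) = cw k DV (ρ a x) + lamMul k (ρ a x)) ∧
  (∀ i j, ∀ a ∈ L ⊓ par i, ∀ x ∈ parV j, ∀ n, ρ a x n ∈ parV (i + j)) ∧
  (∀ i j, ∀ a ∈ L ⊓ par i, ∀ b ∈ L ⊓ par j, ∀ x,
    opComp k ρ ρ a b x - sgn i j • opCompSwap k ρ ρ b a x = opSubst k Br ρ a b x)

end Structures
section Extension

variable {A B W V : Type} [AddCommGroup A] [Module k A] [AddCommGroup B] [Module k B]
  [AddCommGroup W] [Module k W] [AddCommGroup V] [Module k V]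

/-- The sesqui-linear extension of a pairing `F : A ⊗ B → W[λ]` to a pairing
`(H ⊗ A) ⊗ (H ⊗ B) → W[λ]` (where `H ⊗ A` is realized as `ℕ →₀ A`, the index recording
the power of `∂`): `F(∂^n a, ∂^m b) = (-λ)^n (∂+λ)^m F(a, b)`, where `∂` acts on `W[λ]`
coefficientwise via `DW`. -/
def extSesqui (DW : W →ₗ[k] W) (F : A →ₗ[k] B →ₗ[k] (ℕ →₀ W)) :
    (ℕ →₀ A) →ₗ[k] (ℕ →₀ B) →ₗ[k] (ℕ →₀ W) :=
  Finsupp.lsum k fun n =>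
    (Finsupp.lsum (R := k) k).toLinearMap.comp <| LinearMap.pi fun m =>
      (LinearMap.llcomp k B (ℕ →₀ W) (ℕ →₀ W)
        (((-(lamMul k (M := W))) ^ n) * ((cw k DW + lamMul k) ^ m))).comp F

/-- The action of `∂` on `H ⊗ V`, realized as `ℕ →₀ V`. -/
def DD (V : Type) [AddCommGroup V] [Module k V] : (ℕ →₀ V) →ₗ[k] (ℕ →₀ V) :=
  Finsupp.lmapDomain V k Nat.succ

/-- The canonical embedding `V → H ⊗ V`. -/
def emb (V : Type) [AddCommGroup V] [Module k V] : V →ₗ[k] (ℕ →₀ V) :=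
  Finsupp.lsingle 0

/-- A grading of `V` lifts coefficientwise to a grading of `H ⊗ V = ℕ →₀ V`. -/
def liftPar {V : Type} [AddCommGroup V] [Module k V] (par : ZMod 2 → Submodule k V)
    (i : ZMod 2) : Submodule k (ℕ →₀ V) where
  carrier := { f | ∀ n, f n ∈ par i }
  add_mem' := fun hf hg n => by
    simpa only [Finsupp.add_apply] using add_mem (hf n) (hg n)
  zero_mem' := fun n => by simp
  smul_mem' := fun c f hf n => by
    simpa only [Finsupp.smul_apply] using Submodule.smul_mem _ c (hf n)

end Extension

section Super

variable (p : Type) [NonUnitalRing p] [Module k p] [SMulCommClass k p p] [IsScalarTower k p p]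

/-- An (ordinary) Poisson superalgebra structure on the `ℤ₂`-graded associative
supercommutative algebra `p`, with super Lie bracket `br`. -/
structure IsPoissonSuper (par : ZMod 2 → Submodule k p) (br : p →ₗ[k] p →ₗ[k] p) : Prop where
  sup_eq_top : par 0 ⊔ par 1 = ⊤
  inf_eq_bot : par 0 ⊓ par 1 = ⊥
  mul_mem : ∀ i j (a b : p), a ∈ par i → b ∈ par j → a * b ∈ par (i + j)
  mul_scomm : ∀ i j (a b : p), a ∈ par i → b ∈ par j → a * b = sgn i j • (b * a)
  br_mem : ∀ i j a b, a ∈ par i → b ∈ par j → br a b ∈ par (i + j)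
  br_skew : ∀ i j a b, a ∈ par i → b ∈ par j → br a b = -(sgn i j • br b a)
  br_jacobi : ∀ i j a b c, a ∈ par i → b ∈ par j →
    br a (br b c) = br (br a b) c + sgn i j • br b (br a c)
  leibniz : ∀ i j a b c, a ∈ par i → b ∈ par j →
    br a (b * c) = br a b * c + sgn i j • (b * br a c)

/-- An even derivation of the Poisson superalgebra `(p, par, br)`. -/
structure IsEvenDerivation (par : ZMod 2 → Submodule k p) (br : p →ₗ[k] p →ₗ[k] p)
    (d : p →ₗ[k] p) : Prop where
  even : ∀ i a, a ∈ par i → d a ∈ par i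
  map_mul : ∀ a b, d (a * b) = d a * b + a * d b
  map_br : ∀ a b, d (br a b) = br (d a) b + br a (d b)

/-- Base pairing `a ⊗ b ↦ a b` (constant in `λ`) for the current/quadratic constructions. -/
def curMul0 : p →ₗ[k] p →ₗ[k] (ℕ →₀ (ℕ →₀ p)) :=
  (LinearMap.mul k p).compr₂ ((cst k).comp (emb k p))

/-- Base pairing `a ⊗ b ↦ {a, b}` (constant in `λ`) for the current construction. -/
def curBr0 (br : p →ₗ[k] p →ₗ[k] p) : p →ₗ[k] p →ₗ[k] (ℕ →₀ (ℕ →₀ p)) :=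
  br.compr₂ ((cst k).comp (emb k p))

/-- Base pairing `a ⊗ b ↦ {a, b} + ∂ (d a · b) + λ d(a b)` of the Poisson conformal
superalgebra `L(p, d)`. -/
def qua0 (br : p →ₗ[k] p →ₗ[k] p) (d : p →ₗ[k] p) : p →ₗ[k] p →ₗ[k] (ℕ →₀ (ℕ →₀ p)) :=
  br.compr₂ ((cst k).comp (emb k p))
    + ((LinearMap.mul k p).comp d).compr₂ ((cst k).comp ((DD k p).comp (emb k p)))
    + ((LinearMap.mul k p).compr₂ d).compr₂ ((lamMul k).comp ((cst k).comp (emb k p)))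

/-- The multiplication `(a ∂^n)_λ (b ∂^m) = (-λ)^n (∂+λ)^m (a b)` on `H ⊗ p`. -/
def LpdMul : (ℕ →₀ p) →ₗ[k] (ℕ →₀ p) →ₗ[k] (ℕ →₀ (ℕ →₀ p)) :=
  extSesqui k (DD k p) (curMul0 k p)

/-- The `λ`-bracket of the current Poisson conformal superalgebra `Cur p`. -/
def CurBr (br : p →ₗ[k] p →ₗ[k] p) : (ℕ →₀ p) →ₗ[k] (ℕ →₀ p) →ₗ[k] (ℕ →₀ (ℕ →₀ p)) :=
  extSesqui k (DD k p) (curBr0 k p br)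

/-- The `λ`-bracket of the Poisson conformal superalgebra `L(p, d)`. -/
def LpdBr (br : p →ₗ[k] p →ₗ[k] p) (d : p →ₗ[k] p) :
    (ℕ →₀ p) →ₗ[k] (ℕ →₀ p) →ₗ[k] (ℕ →₀ (ℕ →₀ p)) :=
  extSesqui k (DD k p) (qua0 k p br d)

/-- The twisted action `ρ̂_λ(a, u) = [a_λ u] + λ (a_λ u)` on `L(p, d)`. -/
def LpdRho (br : p →ₗ[k] p →ₗ[k] p) (d : p →ₗ[k] p) :
    (ℕ →₀ p) →ₗ[k] (ℕ →₀ p) →ₗ[k] (ℕ →₀ (ℕ →₀ p)) :=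
  LpdBr k p br d + (LpdMul k p).compr₂ (lamMul k)

end Super


set_option linter.unusedSectionVars false

section AuxCW

variable {M N Q : Type} [AddCommGroup M] [Module k M] [AddCommGroup N] [Module k N]
  [AddCommGroup Q] [Module k Q]

lemma cw_apply (f : M →ₗ[k] N) (u : ℕ →₀ M) (n : ℕ) : cw k f u n = f (u n) := by
  simp [cw]

lemma cw_single (f : M →ₗ[k] N) (n : ℕ) (m : M) :
    cw k f (Finsupp.single n m) = Finsupp.single n (f m) := by
  simp [cw, Finsupp.mapRange_single]

lemma cw_comp (g : N →ₗ[k] Q) (f : M →ₗ[k] N) (u : ℕ →₀ M) :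
    cw k g (cw k f u) = cw k (g ∘ₗ f) u := by
  ext n; simp [cw_apply]

lemma cw_map_add (f g : M →ₗ[k] N) (u : ℕ →₀ M) :
    cw k (f + g) u = cw k f u + cw k g u := by
  ext n; simp [cw_apply]

lemma cw_zero_map (u : ℕ →₀ M) : cw k (0 : M →ₗ[k] N) u = 0 := by
  ext n; simp [cw_apply]

lemma pow_comp_comm {E F : Type} [AddCommGroup E] [Module k E] [AddCommGroup F] [Module k F]
    (p : E →ₗ[k] E) (q : F →ₗ[k] F) (h : E →ₗ[k] F) (hc : q ∘ₗ h = h ∘ₗ p) (n : ℕ) :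
    (q ^ n) ∘ₗ h = h ∘ₗ (p ^ n) := by
  induction n with
  | zero => simp [Module.End.one_eq_id]
  | succ n ih =>
      rw [pow_succ, pow_succ, Module.End.mul_eq_comp, Module.End.mul_eq_comp,
        LinearMap.comp_assoc, hc, ← LinearMap.comp_assoc, ih, LinearMap.comp_assoc]

lemma lamMul_cw (f : M →ₗ[k] N) (u : ℕ →₀ M) :
    lamMul k (cw k f u) = cw k f (lamMul k u) := by
  simp only [lamMul, cw, Finsupp.lmapDomain_apply, Finsupp.mapRange.linearMap_apply]
  exact Finsupp.mapDomain_mapRange _ _ _ _ (map_add f)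

lemma lamMul2_cww (f : M →ₗ[k] N) (u : ℕ →₀ (ℕ →₀ M)) :
    lamMul2 k (cw k (cw k f) u) = cw k (cw k f) (lamMul2 k u) := by
  have h : (lamMul k (M := N)) ∘ₗ cw k f = cw k f ∘ₗ lamMul k :=
    LinearMap.ext fun v => lamMul_cw k f v
  simp only [lamMul2, cw_comp, h]

lemma lamMul2_comp (f : M →ₗ[k] N) :
    lamMul2 k ∘ₗ cw k (cw k f) = cw k (cw k f) ∘ₗ lamMul2 k :=
  LinearMap.ext fun u => lamMul2_cww k f u

lemma muMul2_cww (f : M →ₗ[k] N) (u : ℕ →₀ (ℕ →₀ M)) :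
    muMul2 k (cw k (cw k f) u) = cw k (cw k f) (muMul2 k u) := by
  simp only [muMul2, cw, Finsupp.lmapDomain_apply, Finsupp.mapRange.linearMap_apply]
  exact Finsupp.mapDomain_mapRange _ _ _ _ (map_add _)

lemma muMul2_comp (f : M →ₗ[k] N) :
    muMul2 k ∘ₗ cw k (cw k f) = cw k (cw k f) ∘ₗ muMul2 k :=
  LinearMap.ext fun u => muMul2_cww k f u

lemma addMul2_comp (f : M →ₗ[k] N) :
    (lamMul2 k + muMul2 k) ∘ₗ cw k (cw k f) = cw k (cw k f) ∘ₗ (lamMul2 k + muMul2 k) := by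
  rw [LinearMap.add_comp, LinearMap.comp_add, lamMul2_comp, muMul2_comp]

lemma cst2_cww (f : M →ₗ[k] N) (m : M) :
    cst2 k (f m) = cw k (cw k f) (cst2 k m) := by
  simp [cst2, cst, cw_single]

lemma substAdd_cw (f : M →ₗ[k] N) (u : ℕ →₀ M) :
    substAdd k (cw k f u) = cw k (cw k f) (substAdd k u) := by
  induction u using Finsupp.induction_linear with
  | zero => simp
  | add u v hu hv => rw [map_add, map_add, hu, hv, map_add, map_add]
  | single n m =>
      rw [cw_single]
      simp only [substAdd, Finsupp.lsum_single, LinearMap.comp_apply]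
      rw [cst2_cww]
      exact LinearMap.congr_fun (pow_comp_comm k _ _ _ (addMul2_comp k f) n) (cst2 k m)

lemma swapVar_cww (f : M →ₗ[k] N) (u : ℕ →₀ (ℕ →₀ M)) :
    swapVar k (cw k (cw k f) u) = cw k (cw k f) (swapVar k u) := by
  induction u using Finsupp.induction_linear with
  | zero => simp
  | add u v hu hv => rw [map_add, map_add, hu, hv, map_add, map_add]
  | single n v =>
      rw [cw_single]
      simp only [swapVar, Finsupp.lsum_single]
      ext i j
      by_cases hnj : n = j <;> simp [cw_apply, Finsupp.single_apply, hnj]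

/-- The summation map used in `opSubst` commutes with coefficientwise maps. -/
lemma opSubstSum_cww (f : M →ₗ[k] N) (w : ℕ →₀ (ℕ →₀ M)) :
    Finsupp.lsum k (fun n => ((lamMul2 k (M := N)) ^ n) ∘ₗ substAdd k) (cw k (cw k f) w)
      = cw k (cw k f)
          (Finsupp.lsum k (fun n => ((lamMul2 k (M := M)) ^ n) ∘ₗ substAdd k) w) := by
  induction w using Finsupp.induction_linear with
  | zero => simp
  | add u v hu hv =>
      rw [map_add, map_add, hu, hv, ← map_add]
      exact congrArg _ (map_add _ u v).symm
  | single n v =>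
      rw [cw_single]
      simp only [Finsupp.lsum_single, LinearMap.comp_apply]
      rw [substAdd_cw]
      exact LinearMap.congr_fun (pow_comp_comm k _ _ _ (lamMul2_comp k f) n) (substAdd k v)

end AuxCW

section AuxRho

variable {L V : Type} [AddCommGroup L] [Module k L] [AddCommGroup V] [Module k V]

/-- The deformed representation map on `V ⊕ Vε`. -/
def rhoE (ρ φ : L →ₗ[k] V →ₗ[k] (ℕ →₀ V)) : L →ₗ[k] (V × V) →ₗ[k] (ℕ →₀ (V × V)) :=
  ((ρ.compl₂ (LinearMap.fst k V V)).compr₂ (cw k (LinearMap.inl k V V)))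
    + ((ρ.compl₂ (LinearMap.snd k V V)).compr₂ (cw k (LinearMap.inr k V V)))
    + ((φ.compl₂ (LinearMap.fst k V V)).compr₂ (cw k (LinearMap.inr k V V)))

variable (ρ φ : L →ₗ[k] V →ₗ[k] (ℕ →₀ V))

lemma rhoE_apply (a : L) (v : V × V) :
    rhoE k ρ φ a v = cw k (LinearMap.inl k V V) (ρ a v.1)
      + cw k (LinearMap.inr k V V) (ρ a v.2) + cw k (LinearMap.inr k V V) (φ a v.1) := by
  simp [rhoE, LinearMap.compr₂_apply, LinearMap.compl₂_apply]

lemma fst_rhoE (a : L) (v : V × V) :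
    cw k (LinearMap.fst k V V) (rhoE k ρ φ a v) = ρ a v.1 := by
  ext n
  simp [rhoE_apply, cw_apply]

lemma snd_rhoE (a : L) (v : V × V) :
    cw k (LinearMap.snd k V V) (rhoE k ρ φ a v) = ρ a v.2 + φ a v.1 := by
  ext n
  simp [rhoE_apply, cw_apply]

lemma fst_opComp (a b : L) (c : V × V) :
    cw k (cw k (LinearMap.fst k V V)) (opComp k (rhoE k ρ φ) (rhoE k ρ φ) a b c)
      = opComp k ρ ρ a b c.1 := by
  unfold opComp
  rw [cw_comp]
  have h : (cw k (LinearMap.fst k V V)) ∘ₗ (rhoE k ρ φ a)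
      = (ρ a) ∘ₗ (LinearMap.fst k V V) := LinearMap.ext fun v => fst_rhoE k ρ φ a v
  rw [h, ← cw_comp, fst_rhoE]

lemma snd_opComp (a b : L) (c : V × V) :
    cw k (cw k (LinearMap.snd k V V)) (opComp k (rhoE k ρ φ) (rhoE k ρ φ) a b c)
      = opComp k ρ ρ a b c.2 + opComp k ρ φ a b c.1 + opComp k φ ρ a b c.1 := by
  unfold opComp
  rw [cw_comp]
  have h : (cw k (LinearMap.snd k V V)) ∘ₗ (rhoE k ρ φ a)
      = (ρ a) ∘ₗ (LinearMap.snd k V V) + (φ a) ∘ₗ (LinearMap.fst k V V) :=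
    LinearMap.ext fun v => snd_rhoE k ρ φ a v
  rw [h, cw_map_add, ← cw_comp, ← cw_comp, fst_rhoE, snd_rhoE, map_add]

lemma fst_opCompSwap (b a : L) (c : V × V) :
    cw k (cw k (LinearMap.fst k V V)) (opCompSwap k (rhoE k ρ φ) (rhoE k ρ φ) b a c)
      = opCompSwap k ρ ρ b a c.1 := by
  unfold opCompSwap
  rw [← swapVar_cww]
  have h := fst_opComp k ρ φ b a c
  unfold opComp at h
  rw [h]

lemma snd_opCompSwap (b a : L) (c : V × V) :
    cw k (cw k (LinearMap.snd k V V)) (opCompSwap k (rhoE k ρ φ) (rhoE k ρ φ) b a c)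
      = opCompSwap k ρ ρ b a c.2 + opCompSwap k ρ φ b a c.1 + opCompSwap k φ ρ b a c.1 := by
  unfold opCompSwap
  rw [← swapVar_cww]
  have h := snd_opComp k ρ φ b a c
  unfold opComp at h
  rw [h, map_add, map_add]

lemma fst_opSubst (BL : L →ₗ[k] L →ₗ[k] (ℕ →₀ L)) (a b : L) (c : V × V) :
    cw k (cw k (LinearMap.fst k V V)) (opSubst k BL (rhoE k ρ φ) a b c)
      = opSubst k BL ρ a b c.1 := by
  unfold opSubst
  rw [← opSubstSum_cww, cw_comp]
  have h : (cw k (LinearMap.fst k V V)) ∘ₗ ((rhoE k ρ φ).flip c)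
      = ρ.flip c.1 := LinearMap.ext fun l => fst_rhoE k ρ φ l c
  rw [h]

lemma snd_opSubst (BL : L →ₗ[k] L →ₗ[k] (ℕ →₀ L)) (a b : L) (c : V × V) :
    cw k (cw k (LinearMap.snd k V V)) (opSubst k BL (rhoE k ρ φ) a b c)
      = opSubst k BL ρ a b c.2 + opSubst k BL φ a b c.1 := by
  unfold opSubst
  rw [← opSubstSum_cww, cw_comp]
  have h : (cw k (LinearMap.snd k V V)) ∘ₗ ((rhoE k ρ φ).flip c)
      = ρ.flip c.2 + φ.flip c.1 := LinearMap.ext fun l => snd_rhoE k ρ φ l c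
  rw [h, cw_map_add, map_add]

lemma pair_eq_iff (u v : ℕ →₀ (ℕ →₀ (V × V))) :
    u = v ↔ cw k (cw k (LinearMap.fst k V V)) u = cw k (cw k (LinearMap.fst k V V)) v
      ∧ cw k (cw k (LinearMap.snd k V V)) u = cw k (cw k (LinearMap.snd k V V)) v := by
  constructor
  · rintro rfl; exact ⟨rfl, rfl⟩
  · rintro ⟨h1, h2⟩
    refine Finsupp.ext fun n => Finsupp.ext fun m => ?_
    have e1 : ((u n) m).1 = ((v n) m).1 := by
      have := congrArg (fun w : ℕ →₀ (ℕ →₀ V) => w n m) h1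
      simpa [cw_apply] using this
    have e2 : ((u n) m).2 = ((v n) m).2 := by
      have := congrArg (fun w : ℕ →₀ (ℕ →₀ V) => w n m) h2
      simpa [cw_apply] using this
    exact Prod.ext e1 e2

lemma opComp_zero_right (F G : L →ₗ[k] V →ₗ[k] (ℕ →₀ V)) (a b : L) :
    opComp k F G a b (0 : V) = 0 := by
  simp [opComp]

lemma opCompSwap_zero_right (F G : L →ₗ[k] V →ₗ[k] (ℕ →₀ V)) (b a : L) :
    opCompSwap k F G b a (0 : V) = 0 := by
  simp [opCompSwap]

lemma opSubst_zero_right (BL : L →ₗ[k] L →ₗ[k] (ℕ →₀ L))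
    (G : L →ₗ[k] V →ₗ[k] (ℕ →₀ V)) (a b : L) :
    opSubst k BL G a b (0 : V) = 0 := by
  have h0 : G.flip (0 : V) = 0 := map_zero G.flip
  simp [opSubst, h0, cw_zero_map]

end AuxRho


/-- **Deformations of conformal representations and 1-cocycles.**
Let `ρ` be a conformal representation of a Lie conformal superalgebra `L` on `V`, and let
`φ_λ : L ⊗ V → V[λ]` be a parity-preserving sesqui-linear map. On `V ⊕ Vε` define
`ρ^ε_λ(a, x + yε) = ρ_λ(a,x) + (ρ_λ(a,y) + φ_λ(a,x))ε`. Then `ρ^ε` is a conformal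
representation of `L` on `V ⊕ Vε` iff `φ` satisfies the cocycle equation
`φ_{λ+μ}([a_λ b], x) = φ_λ(a, ρ_μ(b,x)) + ρ_λ(a, φ_μ(b,x))
  - (-1)^{|a||b|} φ_μ(b, ρ_λ(a,x)) - (-1)^{|a||b|} ρ_μ(b, φ_λ(a,x))`. -/
theorem deformation_iff_cocycle
    (L V : Type) [AddCommGroup L] [Module k L] [AddCommGroup V] [Module k V]
    (DL : L →ₗ[k] L) (parL : ZMod 2 → Submodule k L) (BL : L →ₗ[k] L →ₗ[k] (ℕ →₀ L))
    (hL : IsLieConfSuper k DL parL BL)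
    (DV : V →ₗ[k] V) (parV : ZMod 2 → Submodule k V)
    (ρ : L →ₗ[k] V →ₗ[k] (ℕ →₀ V))
    (hρ : IsConfRep k DL parL BL DV parV ρ)
    (φ : L →ₗ[k] V →ₗ[k] (ℕ →₀ V))
    (hφ_sesq : IsSesqui k DL DV DV φ)
    (hφ_par : ∀ i j a x, a ∈ parL i → x ∈ parV j → ∀ n, φ a x n ∈ parV (i + j)) :
    IsConfRep k DL parL BL (DV.prodMap DV) (fun i => (parV i).prod (parV i))
        (((ρ.compl₂ (LinearMap.fst k V V)).compr₂ (cw k (LinearMap.inl k V V)))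
          + ((ρ.compl₂ (LinearMap.snd k V V)).compr₂ (cw k (LinearMap.inr k V V)))
          + ((φ.compl₂ (LinearMap.fst k V V)).compr₂ (cw k (LinearMap.inr k V V))))
      ↔ (∀ i j a b, a ∈ parL i → b ∈ parL j → ∀ x : V,
          opSubst k BL φ a b x
            = opComp k φ ρ a b x + opComp k ρ φ a b x
              - sgn i j • opCompSwap k φ ρ b a x - sgn i j • opCompSwap k ρ φ b a x) := by
  have hE : (((ρ.compl₂ (LinearMap.fst k V V)).compr₂ (cw k (LinearMap.inl k V V)))
          + ((ρ.compl₂ (LinearMap.snd k V V)).compr₂ (cw k (LinearMap.inr k V V)))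
          + ((φ.compl₂ (LinearMap.fst k V V)).compr₂ (cw k (LinearMap.inr k V V))))
        = rhoE k ρ φ := rfl
  rw [hE]
  constructor
  · intro h i j a b ha hb x
    have J := h.jacobi i j a b ((x, 0) : V × V) ha hb
    have J2 := congrArg (cw k (cw k (LinearMap.snd k V V))) J
    rw [map_sub, map_zsmul, snd_opComp, snd_opCompSwap, snd_opSubst] at J2
    simp only [opComp_zero_right, opCompSwap_zero_right, opSubst_zero_right, zero_add] at J2
    rw [← J2, smul_add]
    abel
  · intro h
    refine ⟨⟨?_, ?_⟩, ?_, ?_⟩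
    · intro a v
      simp only [rhoE_apply, hρ.sesqui.dleft, hφ_sesq.dleft, map_neg, map_add, lamMul_cw]
      abel
    · intro a v
      have hinl : (DV.prodMap DV) ∘ₗ LinearMap.inl k V V = (LinearMap.inl k V V) ∘ₗ DV := by
        ext w <;> simp
      have hinr : (DV.prodMap DV) ∘ₗ LinearMap.inr k V V = (LinearMap.inr k V V) ∘ₗ DV := by
        ext w <;> simp
      have h1 : ((DV.prodMap DV) v).1 = DV v.1 := rfl
      have h2 : ((DV.prodMap DV) v).2 = DV v.2 := rfl
      rw [rhoE_apply, rhoE_apply, h1, h2, hρ.sesqui.dright, hρ.sesqui.dright,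
        hφ_sesq.dright]
      simp only [map_add, cw_comp, hinl, hinr, lamMul_cw]
      abel
    · intro i j a x ha hx n
      have hx1 : x.1 ∈ parV j := (Submodule.mem_prod.mp hx).1
      have hx2 : x.2 ∈ parV j := (Submodule.mem_prod.mp hx).2
      have hval : (rhoE k ρ φ a x) n = (ρ a x.1 n, ρ a x.2 n + φ a x.1 n) := by
        simp [rhoE_apply, cw_apply, Prod.ext_iff]
      rw [hval, Submodule.mem_prod]
      exact ⟨hρ.parity i j a x.1 ha hx1 n,
        add_mem (hρ.parity i j a x.2 ha hx2 n) (hφ_par i j a x.1 ha hx1 n)⟩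
    · intro i j a b x ha hb
      rw [pair_eq_iff k]
      constructor
      · rw [map_sub, map_zsmul, fst_opComp, fst_opCompSwap, fst_opSubst]
        exact hρ.jacobi i j a b x.1 ha hb
      · rw [map_sub, map_zsmul, snd_opComp, snd_opCompSwap, snd_opSubst]
        have hJ := hρ.jacobi i j a b x.2 ha hb
        have hc := h i j a b ha hb x.1
        rw [hc, ← hJ, smul_add, smul_add]
        abel
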